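/- arXiv:1005.4244 — 5 statements merged into one kernel-verified Lean document; each statement's English description precedes it below -/
import Mathlib

section
/- In a fractional assignment problem, if a feasible allocation x maximizes the total welfare ∑_{s,t} x^{st} w^{st}, then there exist nonnegative prices p^1,…,p^m that are envy-free with respect to x, i.e., x^{st} > 0 implies w^{st} − p^t = max_k (w^{sk} − p^k) ≥ 0. (The prices can be taken from an optimal solution of the dual linear program.) -/
open Finset

/-- Elementary indicator matrix. -/
private def ind {ℓ m : ℕ} (a : Fin ℓ) (b : Fin m) : Fin ℓ → Fin m → ℝ :=
  fun s k => if s = a then (if k = b then 1 else 0) else 0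

private lemma ind_row {ℓ m : ℕ} (a : Fin ℓ) (b : Fin m) (s : Fin ℓ) :
    ∑ k, ind a b s k = if s = a then 1 else 0 := by
  simp [ind, Finset.sum_ite_eq']

private lemma ind_col {ℓ m : ℕ} (a : Fin ℓ) (b : Fin m) (k : Fin m) :
    ∑ s, ind a b s k = if k = b then 1 else 0 := by
  unfold ind
  rw [Finset.sum_ite_eq' Finset.univ a (fun _ => if k = b then (1:ℝ) else 0)]
  simp

private lemma ind_mul_sum {ℓ m : ℕ} (a : Fin ℓ) (b : Fin m) (w : Fin ℓ → Fin m → ℝ) :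
    ∑ s, ∑ k, ind a b s k * w s k = w a b := by
  simp [ind, ite_mul, Finset.sum_ite_eq']

/-- Bellman–Ford style iteration producing candidate prices. -/
private noncomputable def ffun {ℓ m : ℕ} (w x : Fin ℓ → Fin m → ℝ) : ℕ → Fin m → ℝ :=
  fun n => Nat.rec (fun _ => 0)
    (fun _ f k => max (f k)
      ((Finset.univ : Finset (Fin ℓ × Fin m)).fold max 0 (fun st =>
        if 0 < x st.1 st.2 then f st.2 + w st.1 k - w st.1 st.2 else 0))) n

private lemma ffun_zero {ℓ m : ℕ} (w x : Fin ℓ → Fin m → ℝ) (k : Fin m) :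
    ffun w x 0 k = 0 := rfl

private lemma ffun_succ {ℓ m : ℕ} (w x : Fin ℓ → Fin m → ℝ) (n : ℕ) (k : Fin m) :
    ffun w x (n + 1) k = max (ffun w x n k)
      ((Finset.univ : Finset (Fin ℓ × Fin m)).fold max 0 (fun st =>
        if 0 < x st.1 st.2 then ffun w x n st.2 + w st.1 k - w st.1 st.2 else 0)) := rfl

private lemma exists_fold_max {ι α : Type*} [LinearOrder α] (s : Finset ι) (b : α) (f : ι → α) :
    s.fold max b f = b ∨ ∃ i ∈ s, s.fold max b f = f i := by
  induction s using Finset.cons_induction with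
  | empty => exact Or.inl rfl
  | cons a s h ih =>
    rw [Finset.fold_cons]
    rcases max_choice (f a) (s.fold max b f) with hc | hc
    · exact Or.inr ⟨a, Finset.mem_cons_self a s, hc⟩
    · rcases ih with h1 | ⟨i, hi, h2⟩
      · exact Or.inl (hc.trans h1)
      · exact Or.inr ⟨i, Finset.mem_cons_of_mem hi, hc.trans h2⟩

/-- The deviation invariant. -/
private lemma ffun_dev {ℓ m : ℕ} (w x : Fin ℓ → Fin m → ℝ) :
    ∀ (n : ℕ) (t : Fin m), ∃ d : Fin ℓ → Fin m → ℝ,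
      ffun w x n t ≤ (∑ s, ∑ k, d s k * w s k) ∧
      (∀ s, ∑ k, d s k = 0) ∧
      (∀ k, ∑ s, d s k ≤ if k = t then 1 else 0) ∧
      (∀ s k, d s k < 0 → 0 < x s k) ∧
      (∀ s k, -(n : ℝ) ≤ d s k) := by
  intro n
  induction n with
  | zero =>
    intro t
    exact ⟨fun _ _ => 0, by simp [ffun_zero], by simp,
      fun k => by split_ifs <;> simp, fun s k h => by norm_num at h, by norm_num⟩
  | succ n ih =>
    intro t
    set F := (Finset.univ : Finset (Fin ℓ × Fin m)).fold max 0 (fun st =>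
        if 0 < x st.1 st.2 then ffun w x n st.2 + w st.1 t - w st.1 st.2 else 0) with hF
    have hcast : ∀ s k (d : Fin ℓ → Fin m → ℝ), -(n:ℝ) ≤ d s k → -((n+1 : ℕ):ℝ) ≤ d s k := by
      intro s k d h; push_cast; linarith
    rcases max_choice (ffun w x n t) F with hc | hc
    · obtain ⟨d, h1, h2, h3, h4, h5⟩ := ih t
      exact ⟨d, by rw [ffun_succ, ← hF, hc]; exact h1, h2, h3, h4,
        fun s k => hcast s k d (h5 s k)⟩
    · rcases exists_fold_max (Finset.univ : Finset (Fin ℓ × Fin m)) 0 (fun st =>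
          if 0 < x st.1 st.2 then ffun w x n st.2 + w st.1 t - w st.1 st.2 else 0)
        with hz | ⟨st, _, hst⟩
    -- fold equals 0
      · refine ⟨fun _ _ => 0, ?_, by simp, fun k => by split_ifs <;> simp,
          fun s k h => by norm_num at h,
          fun s k => neg_nonpos.mpr (Nat.cast_nonneg _)⟩
        rw [ffun_succ, ← hF, hc, hF, hz]; simp
      · rw [← hF] at hst
        by_cases hsupp : 0 < x st.1 st.2
        · obtain ⟨d, h1, h2, h3, h4, h5⟩ := ih st.2
          refine ⟨fun s k => d s k + ind st.1 t s k - ind st.1 st.2 s k, ?_, ?_, ?_, ?_, ?_⟩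
          · rw [ffun_succ, ← hF, hc, hst, if_pos hsupp]
            have : (∑ s, ∑ k, (d s k + ind st.1 t s k - ind st.1 st.2 s k) * w s k)
                = (∑ s, ∑ k, d s k * w s k) + (∑ s, ∑ k, ind st.1 t s k * w s k)
                  - (∑ s, ∑ k, ind st.1 st.2 s k * w s k) := by
              simp only [add_mul, sub_mul, Finset.sum_add_distrib, Finset.sum_sub_distrib]
            rw [this, ind_mul_sum, ind_mul_sum]
            linarith
          · intro s
            simp only [Finset.sum_add_distrib, Finset.sum_sub_distrib, h2 s, ind_row]
            ring
          · intro k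
            simp only [Finset.sum_add_distrib, Finset.sum_sub_distrib, ind_col]
            have := h3 k
            split_ifs at * <;> linarith
          · intro s k h
            by_cases hd : d s k < 0
            · exact h4 s k hd
            · push_neg at hd
              simp only [ind] at h
              split_ifs at h with e1 e2 e3 e4 e5 <;> try linarith
              all_goals (first
                | (subst e1; rw [show k = st.2 from by assumption]; exact hsupp)
                | linarith)
          · intro s k
            have := h5 s k
            simp only [ind]
            split_ifs <;> push_cast <;> linarith
        · rw [if_neg hsupp] at hst
          refine ⟨fun _ _ => 0, ?_, by simp, fun k => by split_ifs <;> simp,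
            fun s k h => by norm_num at h,
            fun s k => neg_nonpos.mpr (Nat.cast_nonneg _)⟩
          rw [ffun_succ, ← hF, hc, hst]; simp

/-- Key exchange bound: optimality of `x` bounds the iterates on the support of `x`. -/
private lemma ffun_le {ℓ m : ℕ} (α : Fin ℓ → ℝ) (β : Fin m → ℝ) (w : Fin ℓ → Fin m → ℝ)
    (x : Fin ℓ → Fin m → ℝ)
    (hx0 : ∀ s t, 0 ≤ x s t)
    (hrow : ∀ s, ∑ t, x s t ≤ α s)
    (hcol : ∀ t, ∑ s, x s t ≤ β t)
    (hopt : ∀ z : Fin ℓ → Fin m → ℝ,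
      (∀ s t, 0 ≤ z s t) → (∀ s, ∑ t, z s t ≤ α s) → (∀ t, ∑ s, z s t ≤ β t) →
      ∑ s, ∑ t, z s t * w s t ≤ ∑ s, ∑ t, x s t * w s t)
    (n : ℕ) (s : Fin ℓ) (t : Fin m) (hst : 0 < x s t) :
    ffun w x n t ≤ w s t := by
  obtain ⟨d, h1, h2, h3, h4, h5⟩ := ffun_dev w x n t
  set μ := (Finset.univ : Finset (Fin ℓ × Fin m)).fold min (x s t)
      (fun st' => if 0 < x st'.1 st'.2 then x st'.1 st'.2 else x s t) with hμ
  have hμpos : 0 < μ :=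
    (Finset.lt_fold_min _).mpr ⟨hst, fun i _ => by split_ifs with h; exacts [h, hst]⟩
  have hμle : ∀ s' k, 0 < x s' k → μ ≤ x s' k := fun s' k h =>
    (Finset.fold_min_le _).mpr (Or.inr ⟨(s', k), Finset.mem_univ _, le_of_eq (if_pos h)⟩)
  set ε := μ / (n + 1) with hε
  have hεpos : 0 < ε := div_pos hμpos (by positivity)
  have hεμ : ε * (n + 1) = μ := div_mul_cancel₀ μ (by positivity)
  set z := fun s' k => x s' k + ε * (d s' k - ind s t s' k) with hz
  have hz0 : ∀ s' k, 0 ≤ z s' k := by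
    intro s' k
    by_cases hc : 0 ≤ d s' k - ind s t s' k
    · exact add_nonneg (hx0 s' k) (mul_nonneg hεpos.le hc)
    · push_neg at hc
      have hsupp' : 0 < x s' k := by
        by_cases hd : d s' k < 0
        · exact h4 s' k hd
        · push_neg at hd
          simp only [ind] at hc
          split_ifs at hc with e1 e2 <;> try linarith
          rw [e1, e2]; exact hst
      have h5' : -(n : ℝ) - 1 ≤ d s' k - ind s t s' k := by
        have := h5 s' k
        simp only [ind]; split_ifs <;> linarith
      have hx' := hμle s' k hsupp'
      have := mul_le_mul_of_nonneg_left h5' hεpos.le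
      simp only [hz]
      nlinarith
  have hzrow : ∀ s', ∑ k, z s' k ≤ α s' := by
    intro s'
    have hsum : ∑ k, z s' k
        = (∑ k, x s' k) + (ε * (∑ k, d s' k) - ε * (∑ k, ind s t s' k)) := by
      simp only [hz, mul_sub, Finset.sum_add_distrib, Finset.sum_sub_distrib, Finset.mul_sum]
    rw [hsum, h2 s', ind_row]
    have := hrow s'
    split_ifs <;> [skip; skip] <;> nlinarith
  have hzcol : ∀ k, ∑ s', z s' k ≤ β k := by
    intro k
    have hsum : ∑ s', z s' k
        = (∑ s', x s' k) + (ε * (∑ s', d s' k) - ε * (∑ s', ind s t s' k)) := by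
      simp only [hz, mul_sub, Finset.sum_add_distrib, Finset.sum_sub_distrib, Finset.mul_sum]
    rw [hsum, ind_col]
    have h3k := mul_le_mul_of_nonneg_left (h3 k) hεpos.le
    have := hcol k
    split_ifs at * <;> nlinarith
  have hopt' := hopt z hz0 hzrow hzcol
  have hzw : ∑ s', ∑ k, z s' k * w s' k
      = (∑ s', ∑ k, x s' k * w s' k)
        + (ε * (∑ s', ∑ k, d s' k * w s' k) - ε * w s t) := by
    have hterm : ∀ s' k, z s' k * w s' k
        = x s' k * w s' k + (ε * (d s' k * w s' k) - ε * (ind s t s' k * w s' k)) := by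
      intro s' k; simp only [hz]; ring
    simp only [hterm, Finset.sum_add_distrib, Finset.sum_sub_distrib, ← Finset.mul_sum]
    rw [ind_mul_sum]
  rw [hzw] at hopt'
  have hD : (∑ s', ∑ k, d s' k * w s' k) ≤ w s t := by
    have h' : ε * (∑ s', ∑ k, d s' k * w s' k) ≤ ε * w s t := by linarith
    exact le_of_mul_le_mul_left h' hεpos
  exact h1.trans hD



/-- If a feasible allocation of a fractional assignment problem maximizes total
welfare, then there exist nonnegative envy-free prices for it. -/
theorem welfare_maximizing_has_envy_free_prices
    (ℓ m : ℕ) (α : Fin ℓ → ℝ) (β : Fin m → ℝ) (w : Fin ℓ → Fin m → ℝ)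
    (hα : ∀ s, 0 ≤ α s) (hβ : ∀ t, 0 ≤ β t) (hw : ∀ s t, 0 ≤ w s t)
    (x : Fin ℓ → Fin m → ℝ)
    (hx0 : ∀ s t, 0 ≤ x s t)
    (hrow : ∀ s, ∑ t, x s t ≤ α s)
    (hcol : ∀ t, ∑ s, x s t ≤ β t)
    (hopt : ∀ z : Fin ℓ → Fin m → ℝ,
      (∀ s t, 0 ≤ z s t) →
      (∀ s, ∑ t, z s t ≤ α s) →
      (∀ t, ∑ s, z s t ≤ β t) →
      ∑ s, ∑ t, z s t * w s t ≤ ∑ s, ∑ t, x s t * w s t) :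
    ∃ p : Fin m → ℝ, (∀ t, 0 ≤ p t) ∧
      ∀ s t, 0 < x s t →
        (0 ≤ w s t - p t ∧ ∀ k, w s k - p k ≤ w s t - p t) := by
  have hkey : ∀ n s t, 0 < x s t → ffun w x n t ≤ w s t :=
    fun n s t h => ffun_le α β w x hx0 hrow hcol hopt n s t h
  -- a uniform bound on the iterates
  set B := (Finset.univ : Finset (Fin ℓ × Fin m)).fold max 0 (fun st => w st.1 st.2) with hB
  have hB0 : (0 : ℝ) ≤ B := (Finset.le_fold_max _).mpr (Or.inl le_rfl)
  have hwB : ∀ s t, w s t ≤ B := fun s t =>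
    (Finset.le_fold_max _).mpr (Or.inr ⟨(s, t), Finset.mem_univ _, le_rfl⟩)
  have hbnd : ∀ n k, ffun w x n k ≤ 2 * B := by
    intro n
    induction n with
    | zero => intro k; rw [ffun_zero]; linarith
    | succ n ihn =>
      intro k
      rw [ffun_succ]
      refine max_le (ihn k) ((Finset.fold_max_le _).mpr ⟨by linarith, ?_⟩)
      intro st _
      split_ifs with h
      · have h1 := hkey n st.1 st.2 h
        have h2 := hw st.1 st.2
        have h3 := hwB st.1 k
        have h4 := hwB st.1 st.2
        linarith
      · linarith
  -- the prices
  set p : Fin m → ℝ := fun k => ⨆ n, ffun w x n k with hp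
  have hbdd : ∀ k, BddAbove (Set.range fun n => ffun w x n k) := by
    intro k
    exact ⟨2 * B, by rintro _ ⟨n, rfl⟩; exact hbnd n k⟩
  have hple : ∀ n k, ffun w x n k ≤ p k := fun n k => le_ciSup (hbdd k) n
  have harc : ∀ n s t k, 0 < x s t → ffun w x n t + w s k - w s t ≤ ffun w x (n + 1) k := by
    intro n s t k h
    rw [ffun_succ]
    exact le_trans ((Finset.le_fold_max _).mpr
      (Or.inr ⟨(s, t), Finset.mem_univ _, le_of_eq (if_pos h).symm⟩)) (le_max_right _ _)
  refine ⟨p, fun k => ffun_zero w x k ▸ hple 0 k, fun s t h => ⟨?_, ?_⟩⟩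
  · have : p t ≤ w s t := ciSup_le fun n => hkey n s t h
    linarith
  · intro k
    have : p t ≤ p k - w s k + w s t := by
      refine ciSup_le fun n => ?_
      have := (harc n s t k h).trans (hple (n + 1) k)
      linarith
    linarith
end

section
/- Let w^{st}_i, p^t_i (1 ≤ s,t ≤ ℓ) be reals with p chosen envy-free for an allocation x_i of the induced assignment problem of agent i (i.e., x^{st}_i > 0 implies w^{st}_i − p^t_i = max_k (w^{sk}_i − p^k_i)), and suppose x_i is market-clearing with row sums f_i(s) > 0. Define manipulated values w̃^{rs}_i = ∑_t (x^{st}_i / f_i(s)) w^{rt}_i and manipulated prices p̃^s_i = ∑_t (x^{st}_i / f_i(s)) p^t_i. Then for all r, s: w̃^{rs}_i − p̃^s_i ≤ max_k (w^{rk}_i − p^k_i), with equality when r = s. Consequently w̃^{ss}_i − p̃^s_i = max_t (w̃^{st}_i − p̃^t_i), i.e., the manipulated mechanism satisfies the (exact) BIC condition for agent i. -/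
/-- BIC of the manipulated mechanism: averaging values and envy-free prices via
the kernel `x s t / f s` of a market-clearing welfare-maximizing allocation
yields manipulated values/prices for which truth-telling is optimal. -/
theorem manipulated_mechanism_is_BIC
    (ℓ : ℕ) (hne : (Finset.univ : Finset (Fin ℓ)).Nonempty)
    (f : Fin ℓ → ℝ) (hf : ∀ s, 0 < f s)
    (w : Fin ℓ → Fin ℓ → ℝ) (p : Fin ℓ → ℝ)
    (x : Fin ℓ → Fin ℓ → ℝ)
    (hx0 : ∀ s t, 0 ≤ x s t)
    (hrow : ∀ s, ∑ t, x s t = f s)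
    (hcol : ∀ t, ∑ s, x s t = f t)
    (hef : ∀ s t, 0 < x s t →
      w s t - p t = Finset.univ.sup' hne (fun k => w s k - p k))
    (wt : Fin ℓ → Fin ℓ → ℝ)
    (hwt : ∀ r s, wt r s = ∑ t, (x s t / f s) * w r t)
    (pt : Fin ℓ → ℝ)
    (hpt : ∀ s, pt s = ∑ t, (x s t / f s) * p t) :
    (∀ r s, wt r s - pt s ≤ Finset.univ.sup' hne (fun k => w r k - p k)) ∧
    (∀ s, wt s s - pt s = Finset.univ.sup' hne (fun k => w s k - p k)) ∧
    (∀ s, wt s s - pt s = Finset.univ.sup' hne (fun t => wt s t - pt t)) := by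
  set M : Fin ℓ → ℝ := fun r => Finset.univ.sup' hne (fun k => w r k - p k) with hM
  have hfne : ∀ s, f s ≠ 0 := fun s => (hf s).ne'
  have hwsum : ∀ s, ∑ t, x s t / f s = 1 := by
    intro s
    rw [← Finset.sum_div, hrow, div_self (hfne s)]
  have hexpand : ∀ r s, wt r s - pt s = ∑ t, (x s t / f s) * (w r t - p t) := by
    intro r s
    rw [hwt, hpt, ← Finset.sum_sub_distrib]
    congr 1; ext t; ring
  have h1 : ∀ r s, wt r s - pt s ≤ M r := by
    intro r s
    rw [hexpand]
    calc ∑ t, (x s t / f s) * (w r t - p t)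
        ≤ ∑ t, (x s t / f s) * M r := by
          apply Finset.sum_le_sum
          intro t _
          exact mul_le_mul_of_nonneg_left
            (Finset.le_sup' (fun k => w r k - p k) (Finset.mem_univ t))
            (div_nonneg (hx0 s t) (hf s).le)
      _ = M r := by rw [← Finset.sum_mul, hwsum, one_mul]
  have h2 : ∀ s, wt s s - pt s = M s := by
    intro s
    rw [hexpand]
    have : ∀ t ∈ Finset.univ, (x s t / f s) * (w s t - p t) = (x s t / f s) * M s := by
      intro t _
      rcases lt_or_eq_of_le (hx0 s t) with h | h
      · rw [hef s t h]
      · rw [← h]; simp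
    rw [Finset.sum_congr rfl this, ← Finset.sum_mul, hwsum, one_mul]
  refine ⟨h1, h2, fun s => ?_⟩
  apply le_antisymm
  · rw [h2 s]
    exact (h2 s).symm.le.trans (Finset.le_sup' (fun t => wt s t - pt t) (Finset.mem_univ s))
  · exact Finset.sup'_le hne _ (fun t _ => (h1 s t).trans_eq (h2 s).symm)
end

section
/- Let u_max > 0 and u_k = u_max / 2^k for integers k ≥ 0. Let x^{st} ≥ 0 and w^{st} ≥ 0 be finite families with w^{st} ≤ u_max whenever x^{st} > 0. Then ∑_{k=1}^∞ u_k · (∑_{s,t : w^{st} ≥ u_k} x^{st}) ≥ ∑_{s,t} x^{st} w^{st}. -/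
open Finset

lemma geom_summable (umax : ℝ) : Summable (fun k : ℕ => umax / 2 ^ (k + 1)) := by
  have : (fun k : ℕ => umax / 2 ^ (k + 1)) = fun k : ℕ => (umax / 2) * (1 / 2 : ℝ) ^ k := by
    funext k; rw [pow_succ]; rw [one_div_pow]; ring
  rw [this]
  exact (summable_geometric_of_lt_one (by norm_num) (by norm_num)).mul_left _

lemma aux_cover (umax w : ℝ) (humax : 0 < umax) (hw : 0 < w) (hle : w ≤ umax) :
    w ≤ ∑' k : ℕ, (if umax / 2 ^ (k + 1) ≤ w then umax / 2 ^ (k + 1) else 0) := by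
  classical
  have hex : ∃ k : ℕ, umax / 2 ^ (k + 1) ≤ w := by
    obtain ⟨n, hn⟩ := pow_unbounded_of_one_lt (umax / w) (one_lt_two (α := ℝ))
    refine ⟨n, ?_⟩
    have h2 : (0:ℝ) < 2 ^ (n + 1) := by positivity
    have : umax / w < 2 ^ (n + 1) :=
      lt_of_lt_of_le hn (pow_le_pow_right₀ (by norm_num) (Nat.le_succ n))
    rw [div_le_iff₀ h2]
    nlinarith [div_lt_iff₀ hw |>.mp this]
  set K := Nat.find hex with hKdef
  have hK : umax / 2 ^ (K + 1) ≤ w := Nat.find_spec hex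
  have hmin : w ≤ umax / 2 ^ K := by
    rcases Nat.eq_zero_or_pos K with h0 | hpos
    · rw [h0]; simpa using hle
    · have h := Nat.find_min hex (Nat.sub_lt hpos one_pos)
      push_neg at h
      have h2 : w < umax / 2 ^ (K - 1 + 1) := h
      rw [Nat.sub_add_cancel hpos] at h2
      exact h2.le

  have hsum_f : Summable (fun n : ℕ => umax / 2 ^ (K + 1 + n)) := by
    have : (fun n : ℕ => umax / 2 ^ (K + 1 + n))
        = fun n : ℕ => (umax / 2 ^ (K + 1)) * (1 / 2 : ℝ) ^ n := by
      funext n; rw [pow_add]; rw [one_div_pow]; ring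
    rw [this]
    exact (summable_geometric_of_lt_one (by norm_num) (by norm_num)).mul_left _
  have hsum_g : Summable (fun k : ℕ => if umax / 2 ^ (k + 1) ≤ w then umax / 2 ^ (k + 1) else 0) := by
    refine Summable.of_nonneg_of_le (fun k => ?_) (fun k => ?_) (geom_summable umax)
    · split <;> positivity
    · split
      · exact le_refl _
      · positivity
  have hcmp : (∑' n : ℕ, umax / 2 ^ (K + 1 + n))
      ≤ ∑' k : ℕ, (if umax / 2 ^ (k + 1) ≤ w then umax / 2 ^ (k + 1) else 0) := by
    refine Summable.tsum_le_tsum_of_inj (fun n => K + n) (add_right_injective K)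
      (fun k _ => by split <;> positivity) (fun n => ?_) hsum_f hsum_g
    have hcond : umax / 2 ^ (K + n + 1) ≤ w := by
      refine le_trans ?_ hK
      apply div_le_div_of_nonneg_left humax.le (by positivity)
      exact pow_le_pow_right₀ (by norm_num) (by omega)
    simp only [hcond, if_true]
    rw [show K + 1 + n = K + n + 1 by omega]
  refine le_trans ?_ hcmp
  have hval : (∑' n : ℕ, umax / 2 ^ (K + 1 + n)) = umax / 2 ^ K := by
    have h1 : (fun n : ℕ => umax / 2 ^ (K + 1 + n))
        = fun n : ℕ => (umax / 2 ^ (K + 1)) * (1 / 2 : ℝ) ^ n := by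
      funext n; rw [pow_add]; rw [one_div_pow]; ring
    rw [h1, tsum_mul_left, tsum_geometric_of_lt_one (by norm_num) (by norm_num)]
    rw [pow_succ]
    field_simp
    ring
  rw [hval]; exact hmin

/-- Geometric-grid lower bound in the revenue analysis: summing over price
levels `u_k = u_max / 2^k` (for `k ≥ 1`) the allocation mass of pairs whose
value is at least `u_k`, weighted by `u_k`, covers the full welfare. -/
theorem geometric_grid_covers_welfare
    {ι : Type*} [Fintype ι]
    (umax : ℝ) (humax : 0 < umax)
    (x w : ι → ℝ)
    (hx : ∀ j, 0 ≤ x j) (hw : ∀ j, 0 ≤ w j)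
    (hsupp : ∀ j, 0 < x j → w j ≤ umax) :
    ∑ j, x j * w j ≤
      ∑' k : ℕ, (umax / 2 ^ (k + 1)) *
        ∑ j ∈ Finset.univ.filter (fun j => umax / 2 ^ (k + 1) ≤ w j), x j := by
  classical
  have hterm : ∀ k : ℕ, (umax / 2 ^ (k + 1)) *
      ∑ j ∈ Finset.univ.filter (fun j => umax / 2 ^ (k + 1) ≤ w j), x j
      = ∑ j : ι, (if umax / 2 ^ (k + 1) ≤ w j then umax / 2 ^ (k + 1) * x j else 0) := by
    intro k
    rw [Finset.mul_sum, Finset.sum_filter]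
  have hsumm : ∀ j : ι, Summable (fun k : ℕ =>
      if umax / 2 ^ (k + 1) ≤ w j then umax / 2 ^ (k + 1) * x j else 0) := by
    intro j
    refine Summable.of_nonneg_of_le (fun k => ?_) (fun k => ?_)
      ((geom_summable umax).mul_right (x j))
    · split
      · exact mul_nonneg (by positivity) (hx j)
      · exact le_rfl
    · split
      · exact le_rfl
      · exact mul_nonneg (by positivity) (hx j)
  calc ∑ j, x j * w j
      ≤ ∑ j : ι, ∑' k : ℕ, (if umax / 2 ^ (k + 1) ≤ w j then umax / 2 ^ (k + 1) * x j else 0) := by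
        refine Finset.sum_le_sum (fun j _ => ?_)
        rcases eq_or_lt_of_le (hx j) with hxj | hxj
        · rw [← hxj, zero_mul]
          exact tsum_nonneg fun k => by
            split
            · exact mul_nonneg (by positivity) le_rfl
            · exact le_rfl
        rcases eq_or_lt_of_le (hw j) with hwj | hwj
        · rw [← hwj, mul_zero]
          exact tsum_nonneg fun k => by
            split
            · exact mul_nonneg (by positivity) (hx j)
            · exact le_rfl
        · have h1 : (fun k : ℕ => if umax / 2 ^ (k + 1) ≤ w j then umax / 2 ^ (k + 1) * x j else 0)
              = fun k : ℕ => (if umax / 2 ^ (k + 1) ≤ w j then umax / 2 ^ (k + 1) else 0) * x j := by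
            funext k; split <;> simp
          rw [h1, tsum_mul_right, mul_comm (x j) (w j)]
          exact mul_le_mul_of_nonneg_right (aux_cover umax (w j) humax hwj (hsupp j hxj)) (hx j)
    _ = ∑' k : ℕ, ∑ j : ι, (if umax / 2 ^ (k + 1) ≤ w j then umax / 2 ^ (k + 1) * x j else 0) := by
        rw [Summable.tsum_finsetSum (fun j _ => hsumm j)]
    _ = _ := by
        refine tsum_congr (fun k => ?_)
        rw [hterm k]
end

section
/- Consider a single-item, single-agent auction where the agent's value equals 2^k with probability 2^{-k} for k = 1,…,K, and equals 0 with the remaining probability 2^{-K}. The optimal expected social welfare is ∑_{k=1}^K 2^{-k}·2^k = K. However, any mechanism that posts a single price p and sells iff the value is at least p obtains expected revenue at most 2: if p ∈ (2^{j-1}, 2^j], the revenue is p·∑_{k≥j} 2^{-k} ≤ 2^j · 2^{-(j-1)} = 2. Hence the gap between optimal welfare and posted-price revenue is at least K/2 = Ω(log(1/δ)) where δ = 2^{-K} is the granularity. -/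
lemma geom_icc_bound (j K : ℕ) :
    ∑ k ∈ Finset.Icc j K, (1 / 2 ^ k : ℝ) ≤ 2 * (1 / 2) ^ j := by
  have h1 : ∑ k ∈ Finset.Icc j K, (1 / 2 ^ k : ℝ)
      = ∑ i ∈ Finset.range (K + 1 - j), (1 / 2 : ℝ) ^ (j + i) := by
    rw [← Finset.Ico_add_one_right_eq_Icc, Finset.sum_Ico_eq_sum_range]
    simp [one_div, ← inv_pow]
  rw [h1]
  have h2 : ∑ i ∈ Finset.range (K + 1 - j), (1 / 2 : ℝ) ^ (j + i)
      = (1 / 2 : ℝ) ^ j * ∑ i ∈ Finset.range (K + 1 - j), (1 / 2 : ℝ) ^ i := by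
    rw [Finset.mul_sum]
    simp [pow_add]
  rw [h2, mul_comm]
  apply mul_le_mul_of_nonneg_right (sum_geometric_two_le _) (by positivity)

/-- Complementary lower bound: for the equal-revenue-style distribution
(`v = 2^k` with probability `2^{-k}` for `k = 1,…,K`, and `v = 0` otherwise),
the optimal social welfare is `K`, while any posted price `p > 0` obtains
expected revenue at most `2`; hence the welfare-revenue gap is at least
`K - 2 ≥ K/2` for `K ≥ 4`, i.e. `Ω(log(1/δ))` with granularity `δ = 2^{-K}`. -/
theorem posted_price_revenue_gap (K : ℕ) (hK : 1 ≤ K) :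
    (∑ k ∈ Finset.Icc 1 K, (1 / 2 ^ k : ℝ) * 2 ^ k = K) ∧
    (∀ p : ℝ, 0 < p →
      p * ∑ k ∈ (Finset.Icc 1 K).filter (fun k => p ≤ (2 : ℝ) ^ k),
        (1 / 2 ^ k : ℝ) ≤ 2) := by
  constructor
  · have h : ∀ k ∈ Finset.Icc 1 K, (1 / 2 ^ k : ℝ) * 2 ^ k = 1 := by
      intro k _
      field_simp
    rw [Finset.sum_congr rfl h, Finset.sum_const, Nat.card_Icc]
    simp
  · intro p hp
    set S := (Finset.Icc 1 K).filter (fun k => p ≤ (2 : ℝ) ^ k) with hSdef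
    by_cases hne : S.Nonempty
    · set j := S.min' hne with hj
      have hjmem := S.min'_mem hne
      have hpj : p ≤ (2 : ℝ) ^ j := (Finset.mem_filter.mp hjmem).2
      have hsub : S ⊆ Finset.Icc j K := by
        intro k hk
        have hk1 := Finset.mem_Icc.mp (Finset.mem_filter.mp hk).1
        exact Finset.mem_Icc.mpr ⟨S.min'_le k hk, hk1.2⟩
      have hsum : ∑ k ∈ S, (1 / 2 ^ k : ℝ) ≤ 2 * (1 / 2) ^ j :=
        le_trans (Finset.sum_le_sum_of_subset_of_nonneg hsub
          (by intro i _ _; positivity)) (geom_icc_bound j K)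
      have hnn : (0 : ℝ) ≤ ∑ k ∈ S, (1 / 2 ^ k : ℝ) :=
        Finset.sum_nonneg (by intro i _; positivity)
      calc p * ∑ k ∈ S, (1 / 2 ^ k : ℝ)
          ≤ (2 : ℝ) ^ j * (2 * (1 / 2) ^ j) :=
            mul_le_mul hpj hsum hnn (by positivity)
        _ = 2 := by
            rw [div_pow, one_pow]
            field_simp
    · rw [Finset.not_nonempty_iff_eq_empty.mp hne]
      simp
end

section
/- Let S be a random variable (the realized allocation) and S̃ a random variable (the tentative allocation) such that conditionally on S̃, we have 0 ≤ v(S) ≤ v(S̃) pointwise and E[v(S) | S̃] ≥ c · v(S̃) for a constant c ∈ (0,1]. Suppose the distribution of S̃ is supported on at most m̄ outcomes, each with probability at least p₀ > 0. Then sd(v(S)) / E[v(S)] ≤ (1/c)·√(1/p₀). In particular, with c = 1/2 and p₀ = ε/(nmℓ), the ratio is at most √(4nmℓ/ε). -/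
open MeasureTheory ProbabilityTheory

/-- Coefficient-of-variation bound: if the realized welfare `Y` satisfies
`0 ≤ Y ≤ a (J ω)` pointwise, the tentative allocation `J` takes at most `mbar`
values each with probability at least `p₀`, and conditionally on each outcome
`j` the expectation of `Y` is at least `c · a j`, then the standard deviation
of `Y` is at most `(1/c)·√(1/p₀)` times its expectation. -/
theorem coefficient_of_variation_bound
    {Ω : Type*} [MeasureSpace Ω] [IsProbabilityMeasure (ℙ : Measure Ω)]
    (mbar : ℕ) (c p₀ : ℝ) (hc : c ∈ Set.Ioc (0 : ℝ) 1) (hp₀ : 0 < p₀)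
    (J : Ω → Fin mbar) (hJ : Measurable J)
    (a : Fin mbar → ℝ) (ha : ∀ j, 0 ≤ a j)
    (Y : Ω → ℝ) (hY : Measurable Y)
    (hbdd : ∀ ω, Y ω ∈ Set.Icc 0 (a (J ω)))
    (hq : ∀ j, ENNReal.ofReal p₀ ≤ ℙ {ω | J ω = j})
    (hcond : ∀ j, c * a j * (ℙ {ω | J ω = j}).toReal ≤ ∫ ω in {ω | J ω = j}, Y ω) :
    Real.sqrt (variance Y ℙ) ≤ (1 / c) * Real.sqrt (1 / p₀) * ∫ ω, Y ω := by
  obtain ⟨hc0, hc1⟩ := hc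
  set P : Fin mbar → ℝ := fun j => (ℙ {ω | J ω = j}).toReal with hPdef
  have hPnn : ∀ j, 0 ≤ P j := fun j => ENNReal.toReal_nonneg
  have hYnn : ∀ ω, 0 ≤ Y ω := fun ω => (hbdd ω).1
  have hYle : ∀ ω, Y ω ≤ a (J ω) := fun ω => (hbdd ω).2
  set M : ℝ := ∑ j, a j with hMdef
  have haM : ∀ j, a j ≤ M := fun j =>
    Finset.single_le_sum (fun i _ => ha i) (Finset.mem_univ j)
  have hsets : ∀ j, {ω | J ω = j} = J ⁻¹' {j} := fun j => by
    ext ω; simp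
  have hmeasset : ∀ j, MeasurableSet {ω | J ω = j} := fun j => by
    rw [hsets]; exact hJ (measurableSet_singleton j)
  have ham : Measurable a := measurable_from_top
  have haJm : Measurable (fun ω => a (J ω)) := ham.comp hJ
  -- Integrability
  have hYint : Integrable Y ℙ := by
    apply Integrable.mono' (integrable_const M) hY.aestronglyMeasurable
    filter_upwards with ω
    rw [Real.norm_eq_abs, abs_of_nonneg (hYnn ω)]
    exact (hYle ω).trans (haM _)
  have hY2int : Integrable (fun ω => Y ω ^ 2) ℙ := by
    apply Integrable.mono' (integrable_const (M ^ 2)) (hY.pow_const 2).aestronglyMeasurable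
    filter_upwards with ω
    rw [Real.norm_eq_abs, abs_of_nonneg (by positivity)]
    exact pow_le_pow_left₀ (hYnn ω) ((hYle ω).trans (haM _)) 2
  have haJ2int : Integrable (fun ω => a (J ω) ^ 2) ℙ := by
    apply Integrable.mono' (integrable_const (M ^ 2)) (haJm.pow_const 2).aestronglyMeasurable
    filter_upwards with ω
    rw [Real.norm_eq_abs, abs_of_nonneg (by positivity)]
    exact pow_le_pow_left₀ (ha _) (haM _) 2
  -- E[a(J)^2] = ∑ P j * a j ^ 2
  have hmap : ∀ j, (Measure.map J ℙ) {j} = ℙ {ω | J ω = j} := fun j => by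
    rw [Measure.map_apply hJ (measurableSet_singleton j), hsets]
  have haJ2 : ∫ ω, a (J ω) ^ 2 ∂ℙ = ∑ j, P j * a j ^ 2 := by
    have h1 : ∫ ω, a (J ω) ^ 2 ∂ℙ = ∫ x, a x ^ 2 ∂(Measure.map J ℙ) := by
      rw [integral_map hJ.aemeasurable]
      exact ((ham.pow_const 2).aestronglyMeasurable)
    rw [h1, integral_fintype ?_]
    · refine Finset.sum_congr rfl fun j _ => ?_
      rw [measureReal_def, hmap j, smul_eq_mul]
    · exact Integrable.of_finite
  -- ∫ Y = ∑ j, ∫ in {J = j}, Y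
  have hYsum : ∫ ω, Y ω = ∑ j, ∫ ω in {ω | J ω = j}, Y ω := by
    have hu : (⋃ j, {ω | J ω = j}) = Set.univ := by
      ext ω; simp only [Set.mem_iUnion, Set.mem_setOf_eq, Set.mem_univ, iff_true]
      exact ⟨J ω, rfl⟩
    have hd : Pairwise (Function.onFun Disjoint fun j => {ω | J ω = j}) := by
      intro i j hij
      simp only [Function.onFun, Set.disjoint_left]
      rintro ω rfl rfl; exact hij rfl
    have hion : IntegrableOn Y (⋃ j, {ω | J ω = j}) ℙ := by
      rw [hu]; exact hYint.integrableOn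
    have := integral_iUnion hmeasset hd hion
    rw [← tsum_fintype (L := SummationFilter.unconditional _), ← this, hu, Measure.restrict_univ]
  set S : ℝ := ∑ j, P j * a j with hSdef
  have hSnn : 0 ≤ S := Finset.sum_nonneg fun j _ => mul_nonneg (hPnn j) (ha j)
  -- E Y ≥ c * S
  have hEY : c * S ≤ ∫ ω, Y ω := by
    rw [hYsum, hSdef, Finset.mul_sum]
    refine Finset.sum_le_sum fun j _ => ?_
    calc c * (P j * a j) = c * a j * P j := by ring
      _ ≤ _ := hcond j
  have hEYnn : 0 ≤ ∫ ω, Y ω := integral_nonneg hYnn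
  -- a j ≤ S / p₀
  have haS : ∀ j, a j ≤ S / p₀ := fun j => by
    have h1 : p₀ * a j ≤ P j * a j := mul_le_mul_of_nonneg_right ?_ (ha j)
    · have h2 : P j * a j ≤ S :=
        Finset.single_le_sum (fun i _ => mul_nonneg (hPnn i) (ha i)) (Finset.mem_univ j)
      rw [le_div_iff₀ hp₀, mul_comm]
      exact h1.trans h2
    · have h3 : ℙ {ω | J ω = j} ≠ ⊤ := measure_ne_top _ _
      calc p₀ = (ENNReal.ofReal p₀).toReal := (ENNReal.toReal_ofReal hp₀.le).symm
        _ ≤ P j := ENNReal.toReal_mono h3 (hq j)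
  -- variance bound
  have hvar : variance Y ℙ ≤ ((1 / c) * Real.sqrt (1 / p₀) * ∫ ω, Y ω) ^ 2 := by
    have h1 : variance Y ℙ ≤ ∫ ω, Y ω ^ 2 := variance_le_expectation_sq hY.aestronglyMeasurable
    have h2 : ∫ ω, Y ω ^ 2 ≤ ∫ ω, a (J ω) ^ 2 := by
      refine integral_mono hY2int haJ2int fun ω => ?_
      exact pow_le_pow_left₀ (hYnn ω) (hYle ω) 2
    have h3 : ∑ j, P j * a j ^ 2 ≤ S * (S / p₀) := by
      rw [hSdef, Finset.sum_mul]
      refine Finset.sum_le_sum fun j _ => ?_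
      calc P j * a j ^ 2 = (P j * a j) * a j := by ring
        _ ≤ (P j * a j) * (S / p₀) :=
          mul_le_mul_of_nonneg_left (haS j) (mul_nonneg (hPnn j) (ha j))
    have h4 : S ≤ (∫ ω, Y ω) / c := by
      rw [le_div_iff₀ hc0, mul_comm]; exact hEY
    have h5 : S * (S / p₀) ≤ ((∫ ω, Y ω) / c) * (((∫ ω, Y ω) / c) / p₀) := by
      gcongr
    have hsq : Real.sqrt (1 / p₀) ^ 2 = 1 / p₀ := Real.sq_sqrt (by positivity)
    have : ((1 / c) * Real.sqrt (1 / p₀) * ∫ ω, Y ω) ^ 2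
        = ((∫ ω, Y ω) / c) * (((∫ ω, Y ω) / c) / p₀) := by
      rw [mul_pow, mul_pow, hsq]; field_simp
    rw [this]
    calc variance Y ℙ ≤ ∫ ω, Y ω ^ 2 := h1
      _ ≤ ∫ ω, a (J ω) ^ 2 := h2
      _ = ∑ j, P j * a j ^ 2 := haJ2
      _ ≤ S * (S / p₀) := h3
      _ ≤ _ := h5
  have hRHSnn : 0 ≤ (1 / c) * Real.sqrt (1 / p₀) * ∫ ω, Y ω := by positivity
  calc Real.sqrt (variance Y ℙ)
      ≤ Real.sqrt (((1 / c) * Real.sqrt (1 / p₀) * ∫ ω, Y ω) ^ 2) := Real.sqrt_le_sqrt hvar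
    _ = _ := Real.sqrt_sq hRHSnn
end
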